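/- For double derivations Φ, Θ ∈ Der_R(A, A⊗A), the contraction operators on noncommutative differential forms anticommute: i_Φ∘i_Θ + i_Θ∘i_Φ = 0 as maps Ω•_R A → T•_k(Ω•_R A). -/

import Mathlib

open TensorProduct

set_option maxHeartbeats 1000000
set_option synthInstance.maxHeartbeats 1000000

/-- For double derivations `Φ, Θ ∈ Der_R(A, A ⊗ A)`, the contraction
operators on noncommutative differential forms anticommute:
`i_Φ ∘ i_Θ + i_Θ ∘ i_Φ = 0` as maps `Ω•_R A → Ω•_R A ⊗ Ω•_R A ⊗ Ω•_R A` (the extension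
of the contractions to the tensor algebra of forms being as super-derivations of
degree `-1`).

Here `(W, 𝒜, ιA, d, σ)` is the DG algebra `Ω•_R A` of relative noncommutative
differential forms: `W` is graded by `𝒜`, generated by `A` and `dA`, `d` is the
de Rham differential, and `σ` is the sign (parity) operator.  A contraction `i_Θ`
is the degree `-1` super-derivation with values in `W ⊗ W` (outer bimodule structure)
determined by `i_Θ(a) = 0`, `i_Θ(da) = Θ(a)`. -/
theorem stmt9 (k R A W : Type*) [Field k] [CharZero k]
    [Ring R] [Algebra k R] [FiniteDimensional k R] [IsSemisimpleRing R]
    [Ring A] [Algebra k A] (f : R →ₐ[k] A)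
    [Ring W] [Algebra k W]
    (𝒜 : ℕ → Submodule k W) [GradedAlgebra 𝒜]
    (ιA : A →ₐ[k] W) (d σ : W →ₗ[k] W)
    (hι0 : ∀ a : A, ιA a ∈ 𝒜 0)
    (hdg : ∀ (n : ℕ), ∀ w ∈ 𝒜 n, d w ∈ 𝒜 (n + 1))
    (hσ : ∀ (n : ℕ), ∀ w ∈ 𝒜 n, σ w = ((-1 : k) ^ n) • w)
    (hdd : ∀ w : W, d (d w) = 0)
    (hdLeib : ∀ x y : W, d (x * y) = d x * y + σ x * d y)
    (hdR : ∀ r : R, d (ιA (f r)) = 0)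
    (hgen : Algebra.adjoin k
        (Set.range (fun a : A => ιA a) ∪ Set.range (fun a : A => d (ιA a))) = ⊤)
    -- the double derivations
    (Θ Φ : A →ₗ[k] A ⊗[k] A)
    (hΘder : ∀ x y : A, Θ (x * y) = (x ⊗ₜ[k] (1 : A)) * Θ y + Θ x * ((1 : A) ⊗ₜ[k] y))
    (hΘR : ∀ r : R, Θ (f r) = 0)
    (hΦder : ∀ x y : A, Φ (x * y) = (x ⊗ₜ[k] (1 : A)) * Φ y + Φ x * ((1 : A) ⊗ₜ[k] y))
    (hΦR : ∀ r : R, Φ (f r) = 0)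
    -- their contraction operators
    (iΘ iΦ : W →ₗ[k] W ⊗[k] W)
    (hiΘ0 : ∀ a : A, iΘ (ιA a) = 0)
    (hiΘd : ∀ a : A, iΘ (d (ιA a)) = TensorProduct.map ιA.toLinearMap ιA.toLinearMap (Θ a))
    (hiΘL : ∀ x y : W,
        iΘ (x * y) = iΘ x * ((1 : W) ⊗ₜ[k] y) + (σ x ⊗ₜ[k] (1 : W)) * iΘ y)
    (hiΦ0 : ∀ a : A, iΦ (ιA a) = 0)
    (hiΦd : ∀ a : A, iΦ (d (ιA a)) = TensorProduct.map ιA.toLinearMap ιA.toLinearMap (Φ a))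
    (hiΦL : ∀ x y : W,
        iΦ (x * y) = iΦ x * ((1 : W) ⊗ₜ[k] y) + (σ x ⊗ₜ[k] (1 : W)) * iΦ y) :
    (TensorProduct.map iΦ (LinearMap.id : W →ₗ[k] W)
        + (TensorProduct.assoc k W W W).symm.toLinearMap ∘ₗ TensorProduct.map σ iΦ) ∘ₗ iΘ
      + (TensorProduct.map iΘ (LinearMap.id : W →ₗ[k] W)
        + (TensorProduct.assoc k W W W).symm.toLinearMap ∘ₗ TensorProduct.map σ iΘ) ∘ₗ iΦ
      = 0 := by
  classical
  -- σ is a multiplicative involution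
  have hσ1 : σ (1 : W) = 1 := by simpa using hσ 0 1 (SetLike.one_mem_graded 𝒜)
  have hσι : ∀ a : A, σ (ιA a) = ιA a := fun a => by simpa using hσ 0 _ (hι0 a)
  have hσd : ∀ a : A, σ (d (ιA a)) = - d (ιA a) := fun a => by
    rw [hσ 1 _ (hdg 0 _ (hι0 a))]; simp
  have hσmul : ∀ x y : W, σ (x * y) = σ x * σ y := by
    refine DirectSum.Decomposition.inductionOn 𝒜 (by simp) ?_ ?_
    · intro i x
      obtain ⟨x, hx⟩ := x
      refine DirectSum.Decomposition.inductionOn 𝒜 (by simp) ?_ ?_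
      · intro j y
        obtain ⟨y, hy⟩ := y
        show σ (x * y) = σ x * σ y
        rw [hσ (i + j) _ (SetLike.mul_mem_graded hx hy), hσ i x hx, hσ j y hy,
          smul_mul_smul_comm, ← pow_add]
      · intro a b ha hb
        show σ ((x:W) * (a + b)) = _
        rw [mul_add, map_add, map_add, mul_add, ha, hb]
    · intro a b ha hb y
      rw [add_mul, map_add, map_add, add_mul, ha y, hb y]
  have hσσ : ∀ x : W, σ (σ x) = x := by
    refine DirectSum.Decomposition.inductionOn 𝒜 (by simp) ?_ ?_
    · intro i x
      obtain ⟨x, hx⟩ := x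
      show σ (σ x) = x
      rw [hσ i x hx, map_smul, hσ i x hx, smul_smul, ← pow_add,
        Even.neg_one_pow ⟨i, rfl⟩, one_smul]
    · intro a b ha hb; rw [map_add, map_add, ha, hb]
  -- the doubled sign operator on W ⊗ W is multiplicative
  have hTσmul : ∀ s t : W ⊗[k] W,
      TensorProduct.map σ σ (s * t) = TensorProduct.map σ σ s * TensorProduct.map σ σ t := by
    intro s t
    induction s using TensorProduct.induction_on with
    | zero => simp
    | tmul u v =>
      induction t using TensorProduct.induction_on with
      | zero => simp
      | tmul a b => simp [Algebra.TensorProduct.tmul_mul_tmul, hσmul]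
      | add a b ha hb => rw [mul_add, map_add, map_add, mul_add, ha, hb]
    | add a b ha hb => rw [add_mul, map_add, map_add, add_mul, ha, hb]
  have hTσι : ∀ r : A ⊗[k] A,
      TensorProduct.map σ σ (TensorProduct.map ιA.toLinearMap ιA.toLinearMap r)
        = TensorProduct.map ιA.toLinearMap ιA.toLinearMap r := by
    intro r
    induction r using TensorProduct.induction_on with
    | zero => simp
    | tmul a b => simp [hσι]
    | add a b ha hb => simp only [map_add]; rw [ha, hb]
  -- a contraction kills 1
  have hone : ∀ (i : W →ₗ[k] W ⊗[k] W),
      (∀ x y : W, i (x * y) = i x * ((1:W) ⊗ₜ[k] y) + (σ x ⊗ₜ[k] (1:W)) * i y) →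
      i (1 : W) = 0 := by
    intro i hL
    have h := hL 1 1
    rw [mul_one, hσ1, ← Algebra.TensorProduct.one_def, mul_one, one_mul] at h
    exact right_eq_add.mp h
  -- a contraction anticommutes with the sign operator
  have hQ : ∀ (i : W →ₗ[k] W ⊗[k] W),
      (∀ a : A, i (ιA a) = 0) →
      (∀ a : A, TensorProduct.map σ σ (i (d (ιA a))) = i (d (ιA a))) →
      (∀ x y : W, i (x * y) = i x * ((1:W) ⊗ₜ[k] y) + (σ x ⊗ₜ[k] (1:W)) * i y) →
      ∀ x : W, i (σ x) = - TensorProduct.map σ σ (i x) := by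
    intro i h0 hd' hL x
    have hx : x ∈ Algebra.adjoin k
        (Set.range (fun a : A => ιA a) ∪ Set.range (fun a : A => d (ιA a))) := by
      rw [hgen]; trivial
    induction hx using Algebra.adjoin_induction with
    | mem z hz =>
      rcases hz with ⟨a, rfl⟩ | ⟨a, rfl⟩
      · simp [hσι, h0]
      · simp only [hσd, map_neg, hd']
    | algebraMap r =>
      simp [Algebra.algebraMap_eq_smul_one, hσ1, hone i hL]
    | add x y hx hy ihx ihy =>
      simp only [map_add, ihx, ihy, neg_add]
    | mul x y hx hy ihx ihy =>
      have e1 : TensorProduct.map σ σ ((1:W) ⊗ₜ[k] y) = (1:W) ⊗ₜ[k] σ y := by simp [hσ1]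
      have e2 : TensorProduct.map σ σ (σ x ⊗ₜ[k] (1:W)) = x ⊗ₜ[k] (1:W) := by
        simp [hσσ, hσ1]
      rw [hσmul, hL (σ x) (σ y), ihx, ihy, hσσ, hL x y, map_add, hTσmul, hTσmul, e1, e2]
      simp only [neg_mul, mul_neg, neg_add]
  -- auxiliary multiplication identities in (W ⊗ W) ⊗ W
  have aux0 : ∀ (s : W ⊗[k] W) (q y : W),
      s ⊗ₜ[k] (q * y) = (s ⊗ₜ[k] q) * (((1:W) ⊗ₜ[k] (1:W)) ⊗ₜ[k] y) := by
    intro s q y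
    induction s using TensorProduct.induction_on with
    | zero => simp
    | tmul a b => simp [Algebra.TensorProduct.tmul_mul_tmul]
    | add a b ha hb => rw [add_tmul, add_tmul, add_mul, ha, hb]
  have auxa : ∀ (u : W) (r : W ⊗[k] W) (y : W),
      (TensorProduct.assoc k W W W).symm (u ⊗ₜ[k] (r * ((1:W) ⊗ₜ[k] y)))
        = (TensorProduct.assoc k W W W).symm (u ⊗ₜ[k] r)
            * (((1:W) ⊗ₜ[k] (1:W)) ⊗ₜ[k] y) := by
    intro u r y
    induction r using TensorProduct.induction_on with
    | zero => simp
    | tmul a b => simp [Algebra.TensorProduct.tmul_mul_tmul]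
    | add a b ha hb =>
      rw [add_mul, tmul_add, map_add, tmul_add, map_add, add_mul, ha, hb]
  have auxb : ∀ (u v : W) (r : W ⊗[k] W),
      (TensorProduct.assoc k W W W).symm (u ⊗ₜ[k] ((v ⊗ₜ[k] (1:W)) * r))
        = ((u ⊗ₜ[k] v) ⊗ₜ[k] (1:W))
            * (TensorProduct.assoc k W W W).symm ((1:W) ⊗ₜ[k] r) := by
    intro u v r
    induction r using TensorProduct.induction_on with
    | zero => simp
    | tmul a b => simp [Algebra.TensorProduct.tmul_mul_tmul]
    | add a b ha hb =>
      rw [mul_add, tmul_add, map_add, tmul_add, map_add, mul_add, ha, hb]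
  have auxc1 : ∀ (s : W ⊗[k] W) (p q : W),
      (s * ((1:W) ⊗ₜ[k] p)) ⊗ₜ[k] q = (s ⊗ₜ[k] (1:W)) * (((1:W) ⊗ₜ[k] p) ⊗ₜ[k] q) := by
    intro s p q
    induction s using TensorProduct.induction_on with
    | zero => simp
    | tmul a b => simp [Algebra.TensorProduct.tmul_mul_tmul]
    | add a b ha hb => rw [add_mul, add_tmul, ha, hb, add_tmul, add_mul]
  have auxc2 : ∀ (x : W) (r : W ⊗[k] W) (q : W),
      (((x ⊗ₜ[k] (1:W)) * r) ⊗ₜ[k] q)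
        = ((x ⊗ₜ[k] (1:W)) ⊗ₜ[k] (1:W)) * (r ⊗ₜ[k] q) := by
    intro x r q
    induction r using TensorProduct.induction_on with
    | zero => simp
    | tmul a b => simp [Algebra.TensorProduct.tmul_mul_tmul]
    | add a b ha hb => rw [mul_add, add_tmul, ha, hb, add_tmul, mul_add]
  have auxc3 : ∀ (x u : W) (r : W ⊗[k] W),
      (TensorProduct.assoc k W W W).symm ((x * u) ⊗ₜ[k] r)
        = ((x ⊗ₜ[k] (1:W)) ⊗ₜ[k] (1:W))
            * (TensorProduct.assoc k W W W).symm (u ⊗ₜ[k] r) := by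
    intro x u r
    induction r using TensorProduct.induction_on with
    | zero => simp
    | tmul a b => simp [Algebra.TensorProduct.tmul_mul_tmul]
    | add a b ha hb => rw [tmul_add, map_add, tmul_add, map_add, mul_add, ha, hb]
  -- the extended contraction kills the image of A ⊗ A
  have hΨι : ∀ (i : W →ₗ[k] W ⊗[k] W), (∀ a : A, i (ιA a) = 0) →
      ∀ r : A ⊗[k] A,
        TensorProduct.map i LinearMap.id (TensorProduct.map ιA.toLinearMap ιA.toLinearMap r)
          + (TensorProduct.assoc k W W W).symm
              (TensorProduct.map σ i (TensorProduct.map ιA.toLinearMap ιA.toLinearMap r))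
          = 0 := by
    intro i h0 r
    induction r using TensorProduct.induction_on with
    | zero => simp
    | tmul a b => simp [h0]
    | add a b ha hb =>
      simp only [map_add]
      rw [add_add_add_comm, ha, hb, add_zero]
  -- Leibniz rule I: right multiplication by 1 ⊗ y
  have hL1 : ∀ (i : W →ₗ[k] W ⊗[k] W),
      (∀ x y : W, i (x * y) = i x * ((1:W) ⊗ₜ[k] y) + (σ x ⊗ₜ[k] (1:W)) * i y) →
      ∀ (t : W ⊗[k] W) (y : W),
        TensorProduct.map i LinearMap.id (t * ((1:W) ⊗ₜ[k] y))
          + (TensorProduct.assoc k W W W).symm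
              (TensorProduct.map σ i (t * ((1:W) ⊗ₜ[k] y)))
        = (TensorProduct.map i LinearMap.id t
            + (TensorProduct.assoc k W W W).symm (TensorProduct.map σ i t))
              * (((1:W) ⊗ₜ[k] (1:W)) ⊗ₜ[k] y)
          + (TensorProduct.map σ σ t ⊗ₜ[k] (1:W))
              * (TensorProduct.assoc k W W W).symm ((1:W) ⊗ₜ[k] (i y)) := by
    intro i hL t y
    induction t using TensorProduct.induction_on with
    | zero => simp
    | tmul p q =>
      simp only [Algebra.TensorProduct.tmul_mul_tmul, one_mul, mul_one,
        TensorProduct.map_tmul, LinearMap.id_coe, id_eq]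
      rw [hL q y, tmul_add, map_add, aux0 (i p) q y, auxa (σ p) (i q) y,
        auxb (σ p) (σ q) (i y), add_mul]
      abel
    | add a b ha hb =>
      simp only [add_mul, map_add, add_tmul]
      rw [add_add_add_comm, ha, hb]
      simp only [add_mul]
      abel
  -- Leibniz rule II: left multiplication by σ x ⊗ 1
  have hL2 : ∀ (i : W →ₗ[k] W ⊗[k] W),
      (∀ x y : W, i (x * y) = i x * ((1:W) ⊗ₜ[k] y) + (σ x ⊗ₜ[k] (1:W)) * i y) →
      (∀ x : W, i (σ x) = - TensorProduct.map σ σ (i x)) →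
      ∀ (x : W) (t : W ⊗[k] W),
        TensorProduct.map i LinearMap.id ((σ x ⊗ₜ[k] (1:W)) * t)
          + (TensorProduct.assoc k W W W).symm
              (TensorProduct.map σ i ((σ x ⊗ₜ[k] (1:W)) * t))
        = ((x ⊗ₜ[k] (1:W)) ⊗ₜ[k] (1:W))
            * (TensorProduct.map i LinearMap.id t
                + (TensorProduct.assoc k W W W).symm (TensorProduct.map σ i t))
          - (TensorProduct.map σ σ (i x) ⊗ₜ[k] (1:W))
              * (TensorProduct.assoc k W W W).symm ((1:W) ⊗ₜ[k] t) := by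
    intro i hL hQi x t
    induction t using TensorProduct.induction_on with
    | zero => simp
    | tmul p q =>
      simp only [Algebra.TensorProduct.tmul_mul_tmul, one_mul, mul_one,
        TensorProduct.map_tmul, LinearMap.id_coe, id_eq]
      rw [hL (σ x) p, hQi x, hσmul, hσσ, add_tmul, neg_mul, neg_tmul,
        auxc1 (TensorProduct.map σ σ (i x)) p q, auxc2 x (i p) q, auxc3 x (σ p) (i q),
        TensorProduct.assoc_symm_tmul, mul_add]
      abel
    | add a b ha hb =>
      simp only [mul_add, map_add, tmul_add]
      rw [add_add_add_comm, ha, hb]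
      simp only [mul_add]
      abel
  have hiΦσ : ∀ x : W, iΦ (σ x) = - TensorProduct.map σ σ (iΦ x) :=
    hQ iΦ hiΦ0 (fun a => by rw [hiΦd]; exact hTσι (Φ a)) hiΦL
  have hiΘσ : ∀ x : W, iΘ (σ x) = - TensorProduct.map σ σ (iΘ x) :=
    hQ iΘ hiΘ0 (fun a => by rw [hiΘd]; exact hTσι (Θ a)) hiΘL
  -- the anticommutator is a derivation
  have hF : ∀ x y : W,
      (TensorProduct.map iΦ LinearMap.id (iΘ (x*y))
        + (TensorProduct.assoc k W W W).symm (TensorProduct.map σ iΦ (iΘ (x*y))))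
      + (TensorProduct.map iΘ LinearMap.id (iΦ (x*y))
        + (TensorProduct.assoc k W W W).symm (TensorProduct.map σ iΘ (iΦ (x*y))))
      = ((TensorProduct.map iΦ LinearMap.id (iΘ x)
          + (TensorProduct.assoc k W W W).symm (TensorProduct.map σ iΦ (iΘ x)))
        + (TensorProduct.map iΘ LinearMap.id (iΦ x)
          + (TensorProduct.assoc k W W W).symm (TensorProduct.map σ iΘ (iΦ x))))
          * (((1:W) ⊗ₜ[k] (1:W)) ⊗ₜ[k] y)
        + ((x ⊗ₜ[k] (1:W)) ⊗ₜ[k] (1:W)) *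
          ((TensorProduct.map iΦ LinearMap.id (iΘ y)
            + (TensorProduct.assoc k W W W).symm (TensorProduct.map σ iΦ (iΘ y)))
          + (TensorProduct.map iΘ LinearMap.id (iΦ y)
            + (TensorProduct.assoc k W W W).symm (TensorProduct.map σ iΘ (iΦ y)))) := by
    intro x y
    rw [hiΘL x y, hiΦL x y]
    simp only [map_add]
    rw [add_add_add_comm
        (TensorProduct.map iΦ LinearMap.id (iΘ x * ((1:W) ⊗ₜ[k] y)))
        (TensorProduct.map iΦ LinearMap.id ((σ x ⊗ₜ[k] (1:W)) * iΘ y)),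
      add_add_add_comm
        (TensorProduct.map iΘ LinearMap.id (iΦ x * ((1:W) ⊗ₜ[k] y)))
        (TensorProduct.map iΘ LinearMap.id ((σ x ⊗ₜ[k] (1:W)) * iΦ y)),
      hL1 iΦ hiΦL (iΘ x) y, hL2 iΦ hiΦL hiΦσ x (iΘ y),
      hL1 iΘ hiΘL (iΦ x) y, hL2 iΘ hiΘL hiΘσ x (iΦ y)]
    simp only [add_mul, mul_add]
    abel
  -- the anticommutator vanishes
  have hF0 : ∀ x : W,
      (TensorProduct.map iΦ LinearMap.id (iΘ x)
        + (TensorProduct.assoc k W W W).symm (TensorProduct.map σ iΦ (iΘ x)))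
      + (TensorProduct.map iΘ LinearMap.id (iΦ x)
        + (TensorProduct.assoc k W W W).symm (TensorProduct.map σ iΘ (iΦ x))) = 0 := by
    intro x
    have hx : x ∈ Algebra.adjoin k
        (Set.range (fun a : A => ιA a) ∪ Set.range (fun a : A => d (ιA a))) := by
      rw [hgen]; trivial
    induction hx using Algebra.adjoin_induction with
    | mem z hz =>
      rcases hz with ⟨a, rfl⟩ | ⟨a, rfl⟩
      · simp [hiΘ0, hiΦ0]
      · simp only [hiΘd, hiΦd]
        rw [hΨι iΦ hiΦ0 (Θ a), hΨι iΘ hiΘ0 (Φ a), add_zero]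
    | algebraMap r =>
      simp [Algebra.algebraMap_eq_smul_one, hone iΘ hiΘL, hone iΦ hiΦL]
    | add u v hu hv ihu ihv =>
      have h2 : _ + _ = (0 : (W ⊗[k] W) ⊗[k] W) + 0 := congrArg₂ (· + ·) ihu ihv
      rw [add_zero] at h2
      refine Eq.trans ?_ h2
      simp only [map_add]
      abel
    | mul u v hu hv ihu ihv =>
      rw [hF u v, ihu, ihv]
      simp
  apply LinearMap.ext
  intro w
  simpa using hF0 w
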